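/- Let F be a free filter on ℕ, regarded as a subspace of the Cantor set 2^ℕ via characteristic functions. Then the product F × 2, where 2 is the discrete two-point space, is homeomorphic to F. -/
import Mathlib

open Filter Topology Set

/-- The copy of the filter `F` inside the Cantor set `2^ℕ`, via characteristic functions. -/
def filterSet (F : Filter ℕ) : Set (ℕ → Bool) := {f | {n | f n = true} ∈ F}

/-- Prepending one bit to a sequence, as a homeomorphism. -/
def consHomeo : (Bool × (ℕ → Bool)) ≃ₜ (ℕ → Bool) where
  toFun p n := Nat.casesOn n p.1 p.2
  invFun g := (g 0, fun n => g (n + 1))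
  left_inv p := rfl
  right_inv g := by funext n; cases n <;> rfl
  continuous_toFun := by
    apply continuous_pi; intro n
    cases n with
    | zero => exact continuous_fst
    | succ k => exact (continuous_apply k).comp continuous_snd
  continuous_invFun := by
    refine Continuous.prodMk (continuous_apply 0) ?_
    exact continuous_pi fun n => continuous_apply (n + 1)

theorem mem_filterSet_cofinite (f : ℕ → Bool) :
    f ∈ filterSet Filter.cofinite ↔ ∃ N, ∀ n ≥ N, f n = true := by
  show {n | f n = true} ∈ Filter.cofinite ↔ _
  rw [Nat.cofinite_eq_atTop, Filter.mem_atTop_sets]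
  rfl

theorem consHomeo_image_cofinite :
    consHomeo '' ((Set.univ : Set Bool) ×ˢ filterSet Filter.cofinite)
      = filterSet Filter.cofinite := by
  ext g
  constructor
  · rintro ⟨⟨b, f⟩, ⟨-, hf⟩, rfl⟩
    rw [mem_filterSet_cofinite] at hf ⊢
    obtain ⟨N, hN⟩ := hf
    refine ⟨N + 1, fun n hn => ?_⟩
    cases n with
    | zero => omega
    | succ m => exact hN m (by omega)
  · intro hg
    refine ⟨(g 0, fun n => g (n + 1)), ⟨trivial, ?_⟩, ?_⟩
    · rw [mem_filterSet_cofinite] at hg ⊢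
      obtain ⟨N, hN⟩ := hg
      exact ⟨N, fun n hn => hN (n + 1) (by omega)⟩
    · funext n; cases n <;> rfl

/-- For a free filter `F` on `ℕ`, viewed as a subspace of the Cantor set, the product
`F × 2` (with `2` the discrete two-point space) is homeomorphic to `F`. -/
theorem filterSet_prod_two_homeomorph (F : Filter ℕ) (hproper : F.NeBot)
    (hfree : F ≤ Filter.cofinite) :
    Nonempty ((↥(filterSet F) × Bool) ≃ₜ ↥(filterSet F)) := by
  by_cases hA : ∃ A ∈ F, Set.Infinite {n | ¬ n ∈ A}
  · -- Case 1: some member of `F` is coinfinite.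
    obtain ⟨A, hAF, hAc⟩ := hA
    haveI : DecidablePred (fun n => n ∈ A) := Classical.decPred _
    -- split the coordinates into those in `A` and those outside
    set e₁ := Homeomorph.piEquivPiSubtypeProd (fun n => n ∈ A) (fun _ => Bool) with he₁
    set T : Set ({x : ℕ // x ∈ A} → Bool) :=
      {h | Subtype.val '' {i | h i = true} ∈ F} with hT
    have hpre : filterSet F = e₁ ⁻¹' (T ×ˢ (Set.univ : Set ({x : ℕ // ¬ x ∈ A} → Bool))) := by
      ext f
      simp only [Set.mem_preimage, Set.mem_prod, Set.mem_univ, and_true]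
      have himg : Subtype.val '' {i : {x : ℕ // x ∈ A} | f ↑i = true}
          = A ∩ {n | f n = true} := by
        ext n
        constructor
        · rintro ⟨⟨m, hm⟩, hfm, rfl⟩; exact ⟨hm, hfm⟩
        · rintro ⟨hn, hfn⟩; exact ⟨⟨n, hn⟩, hfn, rfl⟩
      show {n | f n = true} ∈ F ↔ _
      show _ ↔ Subtype.val '' {i : {x : ℕ // x ∈ A} | f ↑i = true} ∈ F
      rw [himg]
      constructor
      · exact fun h => Filter.inter_mem hAF h
      · exact fun h => Filter.mem_of_superset h Set.inter_subset_right
    have himg2 : e₁ '' filterSet F = T ×ˢ (Set.univ : Set ({x : ℕ // ¬ x ∈ A} → Bool)) := by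
      rw [hpre, Homeomorph.image_preimage]
    haveI : Infinite {x : ℕ // ¬ x ∈ A} := Set.infinite_coe_iff.mpr hAc
    obtain ⟨eAc⟩ : Nonempty ({x : ℕ // ¬ x ∈ A} ≃ ℕ) := nonempty_equiv_of_countable
    have homeo2 : ({x : ℕ // ¬ x ∈ A} → Bool) ≃ₜ (ℕ → Bool) :=
      Homeomorph.piCongrLeft (Y := fun _ => Bool) eAc
    have main : ↥(filterSet F) ≃ₜ ↥T × (ℕ → Bool) :=
      (e₁.image (filterSet F)).trans <|
        (Homeomorph.setCongr himg2).trans <|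
          (Homeomorph.Set.prod T Set.univ).trans <|
            (Homeomorph.refl ↥T).prodCongr <|
              (Homeomorph.Set.univ _).trans homeo2
    have G : ((ℕ → Bool) × Bool) ≃ₜ (ℕ → Bool) :=
      (Homeomorph.prodComm _ _).trans consHomeo
    exact ⟨(main.prodCongr (Homeomorph.refl Bool)).trans <|
      (Homeomorph.prodAssoc _ _ _).trans <|
        ((Homeomorph.refl ↥T).prodCongr G).trans main.symm⟩
  · -- Case 2: `F` is exactly the cofinite filter.
    have hF : F = Filter.cofinite := by
      refine le_antisymm hfree fun s hs => ?_
      rw [Filter.mem_cofinite]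
      by_contra h
      rw [Set.compl_def] at h
      exact hA ⟨s, hs, h⟩
    rw [hF]
    refine ⟨(Homeomorph.prodComm _ _).trans ?_⟩
    have h1 : (Bool × ↥(filterSet Filter.cofinite)) ≃ₜ
        ↥((Set.univ : Set Bool) ×ˢ filterSet Filter.cofinite) :=
      ((((Homeomorph.Set.univ Bool).prodCongr (Homeomorph.refl _)).trans
        (Homeomorph.refl _)).symm).trans (Homeomorph.Set.prod _ _).symm
    exact h1.trans <| (consHomeo.image _).trans (Homeomorph.setCongr consHomeo_image_cofinite)
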